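/- For all x < y in E_J: P_{x,y} = L_{(L(y)−L(x))/2}(Σ_{φ ∈ 𝓙(x,y)} 𝓡_φ), i.e. the weighted Kazhdan–Lusztig polynomial P_{x,y} is obtained from the sum of 𝓡_φ over all E_J-chains φ from x to y by keeping only the terms [q^γ]q^γ with 2γ < L(y) − L(x). (The sum is finite since 𝓡_φ = 0 for chains of length greater than ℓ(y) − ℓ(x) + 1.) -/

import Mathlib

set_option linter.unusedVariables false

open scoped Classical
noncomputable section
namespace WGI

variable (Γ : Type) [AddCommGroup Γ] [LinearOrder Γ] [IsOrderedAddMonoid Γ]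

/-- The group ring `ℤ[Γ]`, with basis `{q^γ : γ ∈ Γ}`. -/
abbrev LZ := AddMonoidAlgebra ℤ Γ

/-- The basis element `q^γ` of `ℤ[Γ]`. -/
def qp (γ : Γ) : LZ Γ := AddMonoidAlgebra.single γ 1

/-- The bar involution of `ℤ[Γ]`, sending `q^γ` to `q^{-γ}`. -/
def barZ : LZ Γ ≃+* LZ Γ :=
  (AddMonoidAlgebra.domCongr ℤ ℤ (AddEquiv.neg Γ)).toRingEquiv

/-- The coefficient `[q^γ] f`. -/
def coeffq (f : LZ Γ) (γ : Γ) : ℤ := f.coeff γ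

/-- The degree of `f ∈ ℤ[Γ]`: the maximum `γ` with `[q^γ] f ≠ 0` (`⊥` for `f = 0`). -/
def degq (f : LZ Γ) : WithBot Γ := f.coeff.support.max

/-- The truncation `U_{α/2}(f) = Σ_{2γ > α} [q^γ]f · q^γ`. -/
def Uhalf (α : Γ) (f : LZ Γ) : LZ Γ := AddMonoidAlgebra.ofCoeff (Finsupp.filter (fun γ => α < γ + γ) f.coeff)

/-- The truncation `L_{α/2}(f) = Σ_{2γ < α} [q^γ]f · q^γ`. -/
def Lhalf (α : Γ) (f : LZ Γ) : LZ Γ := AddMonoidAlgebra.ofCoeff (Finsupp.filter (fun γ => γ + γ < α) f.coeff)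

variable {B W : Type} [Group W] {M : CoxeterMatrix B} (cs : CoxeterSystem M W)

/-- The sign `ε_w = (-1)^{ℓ(w)}`. -/
def eps (w : W) : ℤ := (-1) ^ (cs.length w)

/-- The Bruhat order on `W`: generated by `u < tu` for reflections `t` with `ℓ(u) < ℓ(tu)`. -/
def BruhatLE : W → W → Prop :=
  Relation.ReflTransGen (fun u v => cs.length u < cs.length v ∧ ∃ t, cs.IsReflection t ∧ v = t * u)

/-- The strict Bruhat order. -/
def BruhatLT (u v : W) : Prop := BruhatLE cs u v ∧ u ≠ v

/-- `x` is a suffix of `y` iff `y = z * x` with `ℓ(y) = ℓ(z) + ℓ(x)`; this is the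
left weak Bruhat order `x ≤_L y`. -/
def IsSuffix (x y : W) : Prop := ∃ z, y = z * x ∧ cs.length y = cs.length z + cs.length x

/-- The set `D_J` of minimum coset representatives. -/
def DJ (J : Set B) : Set W := {w | ∀ j ∈ J, cs.length w < cs.length (w * cs.simple j)}

/-- The subgroup `Γ″` of `Γ` generated by the values `L(s)`, `s ∈ S`. -/
def GammaPP (L : W → Γ) : AddSubgroup Γ :=
  AddSubgroup.closure (Set.range fun i : B => L (cs.simple i))

/-- `f` lies in the subring `ℤ[Γ′]` of `ℤ`-linear combinations of products `∏ q_{s_i}^{n_i}`,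
equivalently the support of `f` is contained in `Γ″`. -/
def InZGammaPrime (L : W → Γ) (f : LZ Γ) : Prop :=
  ∀ γ ∈ f.coeff.support, γ ∈ GammaPP Γ cs L

/-- The `𝓡`-polynomial of a length-one multichain:
`𝓡_{x,y} = q_x^{-1} q_y · bar(R_{x,y})`. -/
def Rsingle (L : W → Γ) (Rp : W → W → LZ Γ) (x y : W) : LZ Γ :=
  qp Γ (L y - L x) * barZ Γ (Rp x y)

/-- The `𝓡`-polynomial `𝓡_φ` of a multichain `φ : x = c 0 ≤ c 1 ≤ ⋯ ≤ c (r+1) = y`,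
defined recursively by `𝓡_φ = 𝓡_{x,x₁} · U_{(L(y)-L(x₁))/2}(q_{x₁}^{-1} q_y bar(𝓡_{φ'}))`
where `φ'` is the tail of `φ`. -/
def RchainAux (L : W → Γ) (Rp : W → W → LZ Γ) : (r : ℕ) → (Fin (r + 2) → W) → LZ Γ
  | 0, c => Rsingle Γ L Rp (c 0) (c 1)
  | r + 1, c =>
      Rsingle Γ L Rp (c 0) (c 1) *
        Uhalf Γ (L (c (Fin.last (r + 2))) - L (c 1))
          (qp Γ (L (c (Fin.last (r + 2))) - L (c 1)) *
            barZ Γ (RchainAux L Rp r (fun i => c i.succ)))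

/-- The `𝓡*`-polynomial `𝓡*_φ` of a multichain `φ : x = c 0 ≤ ⋯ ≤ c (r+1) = y`,
defined recursively by `𝓡*_φ = U_{(L(x_r)-L(x))/2}(q_x^{-1} q_{x_r} bar(𝓡*_{φ'})) · 𝓡*_{x_r,y}`
where `φ'` is the initial segment of `φ`. -/
def RstarAux (L : W → Γ) (Rt : W → W → LZ Γ) : (r : ℕ) → (Fin (r + 2) → W) → LZ Γ
  | 0, c => Rsingle Γ L Rt (c 0) (c 1)
  | r + 1, c =>
      Uhalf Γ (L (c ⟨r + 1, by omega⟩) - L (c 0))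
          (qp Γ (L (c ⟨r + 1, by omega⟩) - L (c 0)) *
            barZ Γ (RstarAux L Rt r (fun i => c i.castSucc))) *
        Rsingle Γ L Rt (c ⟨r + 1, by omega⟩) (c (Fin.last (r + 2)))

/-- An `E_J`-multichain `x = x₀ ≤ x₁ ≤ ⋯ ≤ x_{r+1} = y` (Bruhat order) with all entries in `E`. -/
structure MChain (E : Set W) (x y : W) where
  r : ℕ
  c : Fin (r + 2) → W
  first : c 0 = x
  last : c (Fin.last (r + 1)) = y
  mem : ∀ i, c i ∈ E
  mono : ∀ i : Fin (r + 1), BruhatLE cs (c i.castSucc) (c i.succ)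

/-- An `E_J`-multichain is an `E_J`-chain when all steps are strict. -/
def MChain.IsStrict {E : Set W} {x y : W} (φ : MChain cs E x y) : Prop :=
  ∀ i : Fin (φ.r + 1), BruhatLT cs (φ.c i.castSucc) (φ.c i.succ)

set_option maxHeartbeats 1600000

lemma qp_mul (γ δ : Γ) : qp Γ γ * qp Γ δ = qp Γ (γ + δ) := by
  rw [qp, qp, qp, AddMonoidAlgebra.single_mul_single, one_mul]

lemma qp_zero : qp Γ 0 = 1 := rfl

lemma barZ_apply (f : LZ Γ) (γ : Γ) : (barZ Γ f).coeff γ = f.coeff (-γ) := by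
  rw [barZ]
  exact AddMonoidAlgebra.coeff_domCongr (R := ℤ) (A := ℤ) (AddEquiv.neg Γ) f γ

lemma barZ_barZ (f : LZ Γ) : barZ Γ (barZ Γ f) = f := by
  ext γ
  rw [barZ_apply, barZ_apply, neg_neg]

lemma barZ_one : barZ Γ (1 : LZ Γ) = 1 := map_one _

lemma qp_mul_apply (γ : Γ) (f : LZ Γ) (δ : Γ) : (qp Γ γ * f).coeff δ = f.coeff (δ - γ) := by
  rw [qp, AddMonoidAlgebra.coeff_single_mul_apply, one_mul, sub_eq_neg_add]

lemma barZ_qp (γ : Γ) : barZ Γ (qp Γ γ) = qp Γ (-γ) := by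
  ext δ
  rw [barZ_apply]
  show (AddMonoidAlgebra.single γ 1 : LZ Γ).coeff (-δ) = (AddMonoidAlgebra.single (-γ) 1 : LZ Γ).coeff δ
  rw [AddMonoidAlgebra.coeff_single, AddMonoidAlgebra.coeff_single, Finsupp.single_apply, Finsupp.single_apply]
  refine if_congr ?_ rfl rfl
  constructor
  · intro h; rw [h, neg_neg]
  · intro h; rw [← h, neg_neg]

lemma Lhalf_apply (α : Γ) (f : LZ Γ) (γ : Γ) :
    (Lhalf Γ α f).coeff γ = if γ + γ < α then f.coeff γ else 0 := Finsupp.filter_apply _ f.coeff γ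

lemma Uhalf_apply (α : Γ) (f : LZ Γ) (γ : Γ) :
    (Uhalf Γ α f).coeff γ = if α < γ + γ then f.coeff γ else 0 := Finsupp.filter_apply _ f.coeff γ

lemma Lhalf_add (α : Γ) (f g : LZ Γ) :
    Lhalf Γ α (f + g) = Lhalf Γ α f + Lhalf Γ α g := by
  ext γ
  have : (Lhalf Γ α f + Lhalf Γ α g).coeff γ = (Lhalf Γ α f).coeff γ + (Lhalf Γ α g).coeff γ := rfl
  rw [Lhalf_apply, this, Lhalf_apply, Lhalf_apply]
  have hfg : (f + g).coeff γ = f.coeff γ + g.coeff γ := rfl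
  rw [hfg]
  split <;> simp

lemma Lhalf_sum {ι : Type*} (α : Γ) (s : Finset ι) (f : ι → LZ Γ) :
    Lhalf Γ α (∑ i ∈ s, f i) = ∑ i ∈ s, Lhalf Γ α (f i) := by
  classical
  induction s using Finset.induction_on with
  | empty =>
    simp only [Finset.sum_empty]
    ext γ
    rw [Lhalf_apply]
    split <;> simp
  | insert _ _ hni ih =>
    rw [Finset.sum_insert hni, Finset.sum_insert hni, Lhalf_add, ih]

lemma Uhalf_add (α : Γ) (f g : LZ Γ) :
    Uhalf Γ α (f + g) = Uhalf Γ α f + Uhalf Γ α g := by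
  ext γ
  have : (Uhalf Γ α f + Uhalf Γ α g).coeff γ = (Uhalf Γ α f).coeff γ + (Uhalf Γ α g).coeff γ := rfl
  rw [Uhalf_apply, this, Uhalf_apply, Uhalf_apply]
  have hfg : (f + g).coeff γ = f.coeff γ + g.coeff γ := rfl
  rw [hfg]
  split <;> simp

lemma Uhalf_sum {ι : Type*} (α : Γ) (s : Finset ι) (f : ι → LZ Γ) :
    Uhalf Γ α (∑ i ∈ s, f i) = ∑ i ∈ s, Uhalf Γ α (f i) := by
  classical
  induction s using Finset.induction_on with
  | empty =>
    simp only [Finset.sum_empty]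
    ext γ
    rw [Uhalf_apply]
    split <;> simp
  | insert _ _ hni ih =>
    rw [Finset.sum_insert hni, Finset.sum_insert hni, Uhalf_add, ih]

lemma two_sub_lt_iff (β γ : Γ) : (β - γ) + (β - γ) < β ↔ β < γ + γ := by
  constructor
  · intro h
    have h2 := add_lt_add_left h (γ + γ)
    rw [show β - γ + (β - γ) + (γ + γ) = β + β by abel] at h2
    exact lt_of_add_lt_add_left (by rw [show β + (γ + γ) = γ + γ + β by abel] at h2; rwa [show β + β = β + β from rfl] at h2)
  · intro h
    have h2 := add_lt_add_right h (β - γ - γ)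
    rw [show β - γ - γ + β = (β - γ) + (β - γ) by abel, show β - γ - γ + (γ + γ) = β by abel] at h2
    exact h2

/-- The key exchange identity `U_{β/2}(q^β · bar f) = q^β · bar(L_{β/2} f)`. -/
lemma Uhalf_qp_bar (β : Γ) (f : LZ Γ) :
    Uhalf Γ β (qp Γ β * barZ Γ f) = qp Γ β * barZ Γ (Lhalf Γ β f) := by
  ext γ
  rw [Uhalf_apply, qp_mul_apply, barZ_apply, qp_mul_apply, barZ_apply, Lhalf_apply]
  rw [neg_sub]
  by_cases h : β < γ + γ
  · rw [if_pos h, if_pos ((two_sub_lt_iff Γ β γ).mpr h)]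
  · rw [if_neg h, if_neg (fun hc => h ((two_sub_lt_iff Γ β γ).mp hc))]

lemma Lhalf_eq_self {α : Γ} {f : LZ Γ} (h : ∀ γ ∈ f.coeff.support, γ + γ < α) :
    Lhalf Γ α f = f := by
  ext γ
  rw [Lhalf_apply]
  by_cases hγ : f.coeff γ = 0
  · rw [hγ]; split <;> rfl
  · rw [if_pos (h γ (Finsupp.mem_support_iff.mpr hγ))]

lemma Lhalf_qp_bar_eq_zero {α : Γ} {f : LZ Γ} (h : ∀ γ ∈ f.coeff.support, γ + γ < α) :
    Lhalf Γ α (qp Γ α * barZ Γ f) = 0 := by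
  ext γ
  rw [Lhalf_apply, qp_mul_apply, barZ_apply, neg_sub]
  rw [AddMonoidAlgebra.coeff_zero, Finsupp.coe_zero, Pi.zero_apply]
  split
  · rename_i hlt
    by_cases hγ : f.coeff (α - γ) = 0
    · exact hγ
    · exfalso
      have h2 := h _ (Finsupp.mem_support_iff.mpr hγ)
      have h3 := add_lt_add hlt h2
      rw [show γ + γ + ((α - γ) + (α - γ)) = α + α by abel] at h3
      exact absurd h3 (lt_irrefl _)
  · rfl

lemma support_half_bound {f : LZ Γ} {d α : Γ} (hd : degq Γ f = (d : WithBot Γ))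
    (h2 : d + d < α) : ∀ γ ∈ f.coeff.support, γ + γ < α := by
  intro γ hγ
  have hle : (γ : WithBot Γ) ≤ (d : WithBot Γ) := by
    rw [← hd]
    exact Finset.le_max hγ
  have : γ ≤ d := WithBot.coe_le_coe.mp hle
  calc γ + γ ≤ d + d := add_le_add this this
  _ < α := h2


/-- The sign permutation associated to a simple reflection. -/
def sigma (i : B) : Equiv.Perm (W × ℤˣ) where
  toFun z := (cs.simple i * z.1 * cs.simple i, if z.1 = cs.simple i then -z.2 else z.2)
  invFun z := (cs.simple i * z.1 * cs.simple i, if z.1 = cs.simple i then -z.2 else z.2)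
  left_inv := by
    rintro ⟨t, e⟩
    by_cases h : t = cs.simple i
    · subst h
      simp [cs.simple_mul_simple_self]
    · have h2 : cs.simple i * t * cs.simple i ≠ cs.simple i := by
        intro hc
        apply h
        have := congrArg (fun u => cs.simple i * u * cs.simple i) hc
        simpa [mul_assoc, cs.simple_mul_simple_self, cs.simple_mul_simple_cancel_left] using this
      simp only [h2, if_neg, h]
      simp [mul_assoc, cs.simple_mul_simple_cancel_left]
  right_inv := by
    rintro ⟨t, e⟩
    by_cases h : t = cs.simple i
    · subst h
      simp [cs.simple_mul_simple_self]
    · have h2 : cs.simple i * t * cs.simple i ≠ cs.simple i := by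
        intro hc
        apply h
        have := congrArg (fun u => cs.simple i * u * cs.simple i) hc
        simpa [mul_assoc, cs.simple_mul_simple_self, cs.simple_mul_simple_cancel_left] using this
      simp only [h2, if_neg, h]
      simp [mul_assoc, cs.simple_mul_simple_cancel_left]

lemma sigma_apply (i : B) (t : W) (e : ℤˣ) :
    sigma cs i (t, e) = (cs.simple i * t * cs.simple i, if t = cs.simple i then -e else e) := rfl

lemma sigma_liftable : M.IsLiftable fun i => sigma cs i := by
  intro i j
  set a := cs.simple i with ha
  set b := cs.simple j with hb
  set p := a * b with hp
  set m := M i j with hm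
  have hpm : p ^ m = 1 := cs.simple_mul_simple_pow i j
  have haa : a * a = 1 := cs.simple_mul_simple_self i
  have hbb : b * b = 1 := cs.simple_mul_simple_self j
  have hpinv : p⁻¹ = b * a := by
    rw [hp, mul_inv_rev, ha, hb, cs.inv_simple, cs.inv_simple]
  have hbp : b * p = p⁻¹ * b := by
    rw [hpinv, hp, ← mul_assoc]
  have hbpk : ∀ k : ℕ, b * p ^ k = (p ^ k)⁻¹ * b := by
    intro k
    induction k with
    | zero => simp
    | succ n ih =>
      calc b * p ^ (n + 1) = (b * p ^ n) * p := by rw [pow_succ, mul_assoc]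
      _ = (p ^ n)⁻¹ * (b * p) := by rw [ih, mul_assoc]
      _ = (p ^ n)⁻¹ * (p⁻¹ * b) := by rw [hbp]
      _ = (p ^ (n + 1))⁻¹ * b := by rw [pow_succ]; group
  -- the two key characterizations
  have hconj : ∀ (u v t : W), (u * t * u⁻¹ = v) ↔ t = u⁻¹ * v * u := by
    intro u v t
    constructor
    · intro h; rw [← h]; group
    · intro h; rw [h]; group
  have hform : ∀ (n : ℕ) (t : W), (t = (p ^ n)⁻¹ * b) ↔ (p ^ n = b * t⁻¹) := by
    intro n t
    constructor
    · rintro rfl; group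
    · intro h; rw [h]; group
  have hcomp1 : ∀ k : ℕ, (p ^ k)⁻¹ * b * p ^ k = (p ^ (2 * k))⁻¹ * b := by
    intro k
    calc (p ^ k)⁻¹ * b * p ^ k = (p ^ k)⁻¹ * (b * p ^ k) := by rw [mul_assoc]
    _ = (p ^ k)⁻¹ * ((p ^ k)⁻¹ * b) := by rw [hbpk]
    _ = (p ^ k * p ^ k)⁻¹ * b := by group
    _ = (p ^ (2 * k))⁻¹ * b := by rw [two_mul, pow_add]
  have hbab : b * a * b = p⁻¹ * b := by rw [hpinv]
  have hcomp2 : ∀ k : ℕ, (p ^ k)⁻¹ * (b * a * b) * p ^ k = (p ^ (2 * k + 1))⁻¹ * b := by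
    intro k
    calc (p ^ k)⁻¹ * (b * a * b) * p ^ k = (p ^ k)⁻¹ * p⁻¹ * (b * p ^ k) := by
          rw [hbab]; group
    _ = (p ^ k)⁻¹ * p⁻¹ * ((p ^ k)⁻¹ * b) := by rw [hbpk]
    _ = (p ^ k * (p * p ^ k))⁻¹ * b := by group
    _ = (p ^ (2 * k + 1))⁻¹ * b := by
          rw [show p ^ k * (p * p ^ k) = p ^ (2 * k + 1) by rw [two_mul, pow_add, pow_add, pow_one]; group]
  have key1 : ∀ (k : ℕ) (t : W), (p ^ k * t * (p ^ k)⁻¹ = b) ↔ (p ^ (2 * k) = b * t⁻¹) := by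
    intro k t
    rw [hconj, hcomp1, hform]
  have key2 : ∀ (k : ℕ) (t : W), (p ^ k * t * (p ^ k)⁻¹ = b * a * b) ↔ (p ^ (2 * k + 1) = b * t⁻¹) := by
    intro k t
    rw [hconj, hcomp2, hform]
  -- the composite permutation
  set F := (fun i => sigma cs i) i * (fun i => sigma cs i) j with hF
  set gg : W → ℤˣ := fun t =>
    (if t = b then (-1 : ℤˣ) else 1) * (if t = b * a * b then (-1 : ℤˣ) else 1) with hgg
  have hFap : ∀ (t : W) (e : ℤˣ), F (t, e) = (p * t * p⁻¹, e * gg t) := by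
    intro t e
    have h1 : F (t, e) = sigma cs i (sigma cs j (t, e)) := rfl
    rw [h1, sigma_apply, sigma_apply]
    have hc : (b * t * b = a) ↔ t = b * a * b := by
      constructor
      · intro h
        have := congrArg (fun u => b * u * b) h
        rw [← this]
        rw [show b * (b * t * b) * b = (b * b) * t * (b * b) by group, hbb]
        group
      · intro h
        rw [h, show b * (b * a * b) * b = (b * b) * a * (b * b) by group, hbb]
        group
    have hfst : a * (b * t * b) * a = p * t * p⁻¹ := by
      rw [hp, hpinv]; group
    rw [Prod.mk.injEq]
    refine ⟨hfst, ?_⟩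
    rw [hgg]
    simp only [hc]
    by_cases h1 : t = b <;> by_cases h2 : t = b * a * b
    · rw [if_pos h2, if_pos h1, if_pos h1, if_pos (hc.mpr h2)]; simp
    · rw [if_neg h2, if_pos h1, if_pos h1, if_neg (mt hc.mp h2)]; simp
    · rw [if_pos h2, if_neg h1, if_neg h1, if_pos (hc.mpr h2)]; simp
    · rw [if_neg h2, if_neg h1, if_neg h1, if_neg (mt hc.mp h2)]; simp
  have hFn : ∀ (n : ℕ) (t : W) (e : ℤˣ), (F ^ n) (t, e) =
      (p ^ n * t * (p ^ n)⁻¹, e * ∏ k ∈ Finset.range n, gg (p ^ k * t * (p ^ k)⁻¹)) := by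
    intro n
    induction n with
    | zero => intro t e; simp
    | succ n ih =>
      intro t e
      have : (F ^ (n + 1)) (t, e) = (F ^ n) (F (t, e)) := by
        rw [pow_succ, Equiv.Perm.mul_apply]
      rw [this, hFap, ih]
      have hstep : ∀ k : ℕ, p ^ k * (p * t * p⁻¹) * (p ^ k)⁻¹ = p ^ (k + 1) * t * (p ^ (k + 1))⁻¹ := by
        intro k; rw [pow_succ]; group
      rw [Prod.mk.injEq]
      constructor
      · rw [pow_succ]; group
      · rw [Finset.prod_range_succ']
        have h0 : p ^ 0 * t * (p ^ 0)⁻¹ = t := by simp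
        rw [h0]
        have hpr : ∏ k ∈ Finset.range n, gg (p ^ k * (p * t * p⁻¹) * (p ^ k)⁻¹)
            = ∏ k ∈ Finset.range n, gg (p ^ (k + 1) * t * (p ^ (k + 1))⁻¹) :=
          Finset.prod_congr rfl (fun k _ => by rw [hstep k])
        rw [hpr, mul_assoc, mul_comm (gg t)]
  apply Equiv.ext
  rintro ⟨t, e⟩
  rw [hFn m t e, hpm]
  set hh : ℕ → ℤˣ := fun n => if p ^ n = b * t⁻¹ then (-1 : ℤˣ) else 1 with hhh
  have hgh : ∀ k : ℕ, gg (p ^ k * t * (p ^ k)⁻¹) = hh (2 * k) * hh (2 * k + 1) := by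
    intro k
    rw [hgg, hhh]
    simp only
    congr 1
    · exact if_congr (key1 k t) rfl rfl
    · exact if_congr (key2 k t) rfl rfl
  have hdouble : ∀ N : ℕ, ∏ k ∈ Finset.range N, (hh (2 * k) * hh (2 * k + 1))
      = ∏ n ∈ Finset.range (2 * N), hh n := by
    intro N
    induction N with
    | zero => simp
    | succ n ih =>
      rw [Finset.prod_range_succ, ih, show 2 * (n + 1) = (2 * n + 1) + 1 by ring,
        Finset.prod_range_succ, Finset.prod_range_succ, mul_assoc]
  have hper : ∀ n : ℕ, hh (m + n) = hh n := by
    intro n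
    rw [hhh]
    simp only [pow_add, hpm, one_mul]
  have hprod : ∏ k ∈ Finset.range m, gg (p ^ k * t * (p ^ k)⁻¹) = 1 := by
    rw [Finset.prod_congr rfl (fun k _ => hgh k), hdouble, two_mul, Finset.prod_range_add]
    rw [Finset.prod_congr rfl (fun k _ => hper k), Int.units_mul_self]
  rw [hprod]
  simp

/-- The sign homomorphism. -/
def psi : W →* Equiv.Perm (W × ℤˣ) := cs.lift ⟨fun i => sigma cs i, sigma_liftable cs⟩

lemma psi_simple (i : B) : psi cs (cs.simple i) = sigma cs i :=
  cs.lift_apply_simple (sigma_liftable cs) i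

/-- The sign `η(w, t)`. -/
def eta (w t : W) : ℤˣ := (psi cs w (t, 1)).2

lemma psi_word (ω : List B) (t : W) (e : ℤˣ) :
    psi cs (cs.wordProd ω) (t, e) =
      (cs.wordProd ω * t * (cs.wordProd ω)⁻¹,
        e * (-1 : ℤˣ) ^ ((cs.rightInvSeq ω).count t)) := by
  induction ω generalizing t e with
  | nil => simp
  | cons i ω ih =>
    rw [cs.wordProd_cons, map_mul, Equiv.Perm.mul_apply, ih, psi_simple, sigma_apply]
    have hris : cs.rightInvSeq (i :: ω) =
        ((cs.wordProd ω)⁻¹ * cs.simple i * cs.wordProd ω) :: cs.rightInvSeq ω := rfl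
    set w := cs.wordProd ω with hw
    rw [Prod.mk.injEq]
    constructor
    · rw [mul_inv_rev, cs.inv_simple]; group
    · rw [hris, List.count_cons]
      simp only [beq_iff_eq]
      by_cases hcond : w * t * w⁻¹ = cs.simple i
      · have h2 : w⁻¹ * cs.simple i * w = t := by rw [← hcond]; group
        rw [if_pos hcond, if_pos h2, pow_succ, mul_neg_one, mul_neg]
      · have h2 : ¬(w⁻¹ * cs.simple i * w = t) := by
          intro hc; apply hcond; rw [← hc]; group
        rw [if_neg hcond, if_neg h2, add_zero]

lemma psi_shape (w t : W) (e : ℤˣ) :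
    psi cs w (t, e) = (w * t * w⁻¹, e * eta cs w t) := by
  obtain ⟨ω, rfl⟩ := cs.wordProd_surjective w
  rw [psi_word]
  have : eta cs (cs.wordProd ω) t = (-1 : ℤˣ) ^ ((cs.rightInvSeq ω).count t) := by
    rw [eta, psi_word, one_mul]
  rw [this]

lemma eta_eq_count {ω : List B} {w : W} (hω : cs.wordProd ω = w) (t : W) :
    eta cs w t = (-1 : ℤˣ) ^ ((cs.rightInvSeq ω).count t) := by
  subst hω
  rw [eta, psi_word, one_mul]

lemma eta_mul (u v t : W) : eta cs (u * v) t = eta cs v t * eta cs u (v * t * v⁻¹) := by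
  have h1 : psi cs (u * v) (t, 1) = psi cs u (psi cs v (t, 1)) := by
    rw [map_mul, Equiv.Perm.mul_apply]
  rw [psi_shape, psi_shape, psi_shape] at h1
  have := congrArg Prod.snd h1
  simpa using this

lemma eta_simple_self (i : B) : eta cs (cs.simple i) (cs.simple i) = -1 := by
  rw [eta, psi_simple, sigma_apply, if_pos rfl]

lemma mem_ris_of_eta_neg {ω : List B} {w t : W} (hω : cs.wordProd ω = w)
    (h : eta cs w t = -1) : t ∈ cs.rightInvSeq ω := by
  have hc := eta_eq_count cs hω t
  rw [h] at hc
  have hodd : ¬Even ((cs.rightInvSeq ω).count t) := by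
    intro he
    rw [Even.neg_one_pow he] at hc
    exact absurd hc (by decide)
  have : 0 < (cs.rightInvSeq ω).count t := by
    rcases Nat.eq_zero_or_pos ((cs.rightInvSeq ω).count t) with h0 | h0
    · exact absurd (by rw [h0]; exact Even.zero) hodd
    · exact h0
  exact List.count_pos_iff.mp this

lemma isRightInversion_of_eta_neg {w t : W} (ht : cs.IsReflection t)
    (h : eta cs w t = -1) : cs.IsRightInversion w t := by
  obtain ⟨ω, hred, hw⟩ := cs.exists_reduced_word' w
  exact hw ▸ cs.isRightInversion_of_mem_rightInvSeq hred
    (mem_ris_of_eta_neg cs hw.symm h)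

lemma eta_self {t : W} (ht : cs.IsReflection t) : eta cs t t = -1 := by
  obtain ⟨c, i, rfl⟩ := ht
  set t := c * cs.simple i * c⁻¹ with hts
  have h1 : eta cs (c * (cs.simple i * c⁻¹)) t
      = eta cs (cs.simple i * c⁻¹) t
        * eta cs c ((cs.simple i * c⁻¹) * t * (cs.simple i * c⁻¹)⁻¹) := eta_mul ..
  have e1 : (cs.simple i * c⁻¹) * t * (cs.simple i * c⁻¹)⁻¹ = cs.simple i := by
    rw [hts]; group
  have h2 : eta cs (cs.simple i * c⁻¹) t
      = eta cs c⁻¹ t * eta cs (cs.simple i) (c⁻¹ * t * (c⁻¹)⁻¹) := eta_mul ..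
  have e2 : c⁻¹ * t * (c⁻¹)⁻¹ = cs.simple i := by rw [hts]; group
  have h3 : eta cs (c * c⁻¹) t = eta cs c⁻¹ t * eta cs c (c⁻¹ * t * (c⁻¹)⁻¹) := eta_mul ..
  have e3 : eta cs (c * c⁻¹) t = 1 := by
    rw [mul_inv_cancel]
    rw [eta, map_one]
    rfl
  rw [e2] at h2 h3
  rw [e3] at h3
  have : eta cs (c * (cs.simple i * c⁻¹)) t = -1 := by
    rw [h1, e1, h2, eta_simple_self]
    calc eta cs c⁻¹ t * -1 * eta cs c (cs.simple i)
        = -(eta cs c⁻¹ t * eta cs c (cs.simple i)) := by rw [mul_neg_one, neg_mul]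
    _ = -1 := by rw [← h3]
  rw [← this, hts, mul_assoc]

/-- Strong exchange (sign form). -/
lemma eta_neg_of_isRightInversion {w t : W} (h : cs.IsRightInversion w t) :
    eta cs w t = -1 := by
  obtain ⟨ht, hlt⟩ := h
  have hu : (w * t) * t = w := by rw [mul_assoc, ht.mul_self, mul_one]
  have h1 : eta cs ((w * t) * t) t = eta cs t t * eta cs (w * t) (t * t * t⁻¹) := eta_mul ..
  have e1 : t * t * t⁻¹ = t := by rw [ht.mul_self, one_mul, ht.inv]
  rw [hu, e1, eta_self cs ht] at h1
  rcases Int.units_eq_one_or (eta cs (w * t) t) with h2 | h2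
  · rw [h1, h2, mul_one]
  · exfalso
    have h4 := (isRightInversion_of_eta_neg cs ht h2).2
    rw [hu] at h4
    exact absurd h4 (lt_asymm hlt)

/-- Every element has finitely many right inversions. -/
lemma finite_rightInversions (w : W) : {t : W | cs.IsRightInversion w t}.Finite := by
  obtain ⟨ω, hred, hw⟩ := cs.exists_reduced_word' w
  apply Set.Finite.subset (List.finite_toSet (cs.rightInvSeq ω))
  intro t ht
  exact mem_ris_of_eta_neg cs hw.symm (eta_neg_of_isRightInversion cs ht)

/-- Every element has finitely many left inversions. -/
lemma finite_leftInversions (w : W) : {t : W | cs.IsLeftInversion w t}.Finite := by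
  have : {t : W | cs.IsLeftInversion w t} = {t : W | cs.IsRightInversion w⁻¹ t} := by
    ext t
    exact (cs.isRightInversion_inv_iff).symm
  rw [this]
  exact finite_rightInversions cs w⁻¹



lemma bruhatLE_refl (x : W) : BruhatLE cs x x := Relation.ReflTransGen.refl

lemma bruhatLE_trans {x y z : W} (h1 : BruhatLE cs x y) (h2 : BruhatLE cs y z) :
    BruhatLE cs x z := Relation.ReflTransGen.trans h1 h2

lemma bruhatLE_eq_or_length_lt {x y : W} (h : BruhatLE cs x y) :
    x = y ∨ cs.length x < cs.length y := by
  induction h with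
  | refl => exact Or.inl rfl
  | tail hab hbc ih =>
    right
    rcases ih with rfl | ih
    · exact hbc.1
    · exact ih.trans hbc.1

lemma bruhatLE_length_le {x y : W} (h : BruhatLE cs x y) : cs.length x ≤ cs.length y := by
  rcases bruhatLE_eq_or_length_lt cs h with rfl | h
  · exact le_refl _
  · exact h.le

lemma bruhatLT_length_lt {x y : W} (h : BruhatLT cs x y) : cs.length x < cs.length y :=
  (bruhatLE_eq_or_length_lt cs h.1).resolve_left h.2

lemma bruhatLE_antisymm {x y : W} (h1 : BruhatLE cs x y) (h2 : BruhatLE cs y x) : x = y := by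
  rcases bruhatLE_eq_or_length_lt cs h1 with rfl | h1
  · rfl
  · exact absurd (bruhatLE_length_le cs h2) (by omega)

lemma bruhatLT_of_lt_of_le {x t y : W} (h1 : BruhatLT cs x t) (h2 : BruhatLE cs t y) :
    BruhatLT cs x y := by
  refine ⟨bruhatLE_trans cs h1.1 h2, ?_⟩
  rintro rfl
  exact h1.2 (bruhatLE_antisymm cs h1.1 h2)

lemma bruhatLT_of_le_of_lt {x t y : W} (h1 : BruhatLE cs x t) (h2 : BruhatLT cs t y) :
    BruhatLT cs x y := by
  refine ⟨bruhatLE_trans cs h1 h2.1, ?_⟩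
  rintro rfl
  exact h2.2 (bruhatLE_antisymm cs h2.1 h1)

/-- Bruhat intervals are finite. -/
lemma finite_bruhatLE (y : W) : {x : W | BruhatLE cs x y}.Finite := by
  suffices H : ∀ (n : ℕ) (y : W), cs.length y = n → {x : W | BruhatLE cs x y}.Finite by
    exact H _ y rfl
  intro n
  induction n using Nat.strong_induction_on with
  | _ n ih =>
    intro y hy
    have hsub : {x : W | BruhatLE cs x y} ⊆
        {y} ∪ ⋃ t ∈ {t : W | cs.IsLeftInversion y t}, {x : W | BruhatLE cs x (t * y)} := by
      intro x hx
      rcases (Relation.ReflTransGen.cases_tail hx) with rfl | ⟨c, hxc, hstep⟩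
      · exact Or.inl rfl
      · obtain ⟨hlen, t, hrefl, hyc⟩ := hstep
        right
        have hc : c = t * y := by rw [hyc, ← mul_assoc, hrefl.mul_self, one_mul]
        refine Set.mem_biUnion (show t ∈ {t : W | cs.IsLeftInversion y t} from ?_) ?_
        · exact ⟨hrefl, by rw [← hc]; exact hlen⟩
        · show BruhatLE cs x (t * y)
          rw [← hc]; exact hxc
    refine Set.Finite.subset (Set.Finite.union (Set.finite_singleton y) ?_) hsub
    apply Set.Finite.biUnion (finite_leftInversions cs y)
    intro t ht
    exact ih (cs.length (t * y)) (by rw [← hy]; exact ht.2) (t * y) rfl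

lemma finite_interval (x y : W) : {t : W | BruhatLE cs x t ∧ BruhatLE cs t y}.Finite :=
  Set.Finite.subset (finite_bruhatLE cs y) (fun t ht => ht.2)






variable {E : Set W} {x y : W}

lemma MChain.ext' {φ ψ : MChain cs E x y} (hr : φ.r = ψ.r)
    (hc : ∀ i : Fin (φ.r + 2), φ.c i = ψ.c ⟨i.1, by rw [← hr]; exact i.2⟩) : φ = ψ := by
  obtain ⟨r, c, f, l, m, mo⟩ := φ
  obtain ⟨r', c', f', l', m', mo'⟩ := ψ
  dsimp at hr hc
  subst hr
  have : c = c' := funext fun i => (hc i).trans (congrArg c' (Fin.ext rfl))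
  subst this
  rfl

lemma one_val_eq {r : ℕ} : ((1 : Fin (r + 2)) : ℕ) = 1 := by
  simp [Fin.val_one]

/-- Every entry of a chain is `≥ x`. -/
lemma MChain.first_le (φ : MChain cs E x y) (i : Fin (φ.r + 2)) :
    BruhatLE cs x (φ.c i) := by
  obtain ⟨iv, hiv⟩ := i
  induction iv with
  | zero =>
    rw [show (⟨0, hiv⟩ : Fin (φ.r + 2)) = 0 from rfl, φ.first]
    exact bruhatLE_refl cs x
  | succ n ih =>
    have hn : n < φ.r + 2 := by omega
    have hn1 : n < φ.r + 1 := by omega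
    refine bruhatLE_trans cs (ih hn) ?_
    have := φ.mono ⟨n, hn1⟩
    have h1 : (⟨n, hn1⟩ : Fin (φ.r + 1)).castSucc = ⟨n, hn⟩ := rfl
    have h2 : (⟨n, hn1⟩ : Fin (φ.r + 1)).succ = ⟨n + 1, hiv⟩ := rfl
    rwa [h1, h2] at this

/-- Every entry of a chain is `≤ y`. -/
lemma MChain.le_last (φ : MChain cs E x y) (i : Fin (φ.r + 2)) :
    BruhatLE cs (φ.c i) y := by
  suffices H : ∀ (k : ℕ) (i : Fin (φ.r + 2)), i.1 + k = φ.r + 1 → BruhatLE cs (φ.c i) y by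
    exact H (φ.r + 1 - i.1) i (by omega)
  intro k
  induction k with
  | zero =>
    intro i hi
    have : i = Fin.last (φ.r + 1) := Fin.ext (by simpa using hi)
    rw [this, φ.last]
    exact bruhatLE_refl cs y
  | succ n ih =>
    intro i hi
    have hn1 : i.1 < φ.r + 1 := by omega
    have := φ.mono ⟨i.1, hn1⟩
    have h1 : (⟨i.1, hn1⟩ : Fin (φ.r + 1)).castSucc = i := Fin.ext rfl
    rw [h1] at this
    refine bruhatLE_trans cs this (ih _ ?_)
    show i.1 + 1 + n = φ.r + 1
    omega

/-- In a strict chain the length increases at every step. -/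
lemma MChain.length_bound {φ : MChain cs E x y} (hs : φ.IsStrict cs) :
    cs.length x + (φ.r + 1) ≤ cs.length y := by
  suffices H : ∀ (n : ℕ) (hn : n < φ.r + 2), cs.length x + n ≤ cs.length (φ.c ⟨n, hn⟩) by
    have := H (φ.r + 1) (by omega)
    have hl : (⟨φ.r + 1, by omega⟩ : Fin (φ.r + 2)) = Fin.last (φ.r + 1) := rfl
    rw [hl, φ.last] at this
    omega
  intro n
  induction n with
  | zero =>
    intro hn
    have h0 : (⟨0, hn⟩ : Fin (φ.r + 2)) = 0 := rfl
    rw [h0, φ.first]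
    omega
  | succ n ih =>
    intro hiv
    have hn : n < φ.r + 2 := by omega
    have hn1 : n < φ.r + 1 := by omega
    have h1 := ih hn
    have := hs ⟨n, hn1⟩
    have hlt := bruhatLT_length_lt cs this
    have h2 : (⟨n, hn1⟩ : Fin (φ.r + 1)).castSucc = ⟨n, hn⟩ := rfl
    have h3 : (⟨n, hn1⟩ : Fin (φ.r + 1)).succ = ⟨n + 1, hiv⟩ := rfl
    rw [h2, h3] at hlt
    omega


/-- Strict chains from `x` to `y` form a finite set. -/
lemma finite_strict_chains (E : Set W) (x y : W) :
    {φ : MChain cs E x y | φ.IsStrict cs}.Finite := by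
  set S := {φ : MChain cs E x y | φ.IsStrict cs} with hS
  rcases Set.eq_empty_or_nonempty S with hemp | ⟨φ₀, hφ₀⟩
  · rw [hemp]; exact Set.finite_empty
  have hxy : BruhatLE cs x y := by
    have h1 := φ₀.first_le cs (Fin.last (φ₀.r + 1))
    rwa [φ₀.last] at h1
  set I := {t : W | BruhatLE cs x t ∧ BruhatLE cs t y} with hI
  have hIfin : I.Finite := finite_interval cs x y
  have hxI : x ∈ I := ⟨bruhatLE_refl cs x, hxy⟩
  set N := cs.length y - cs.length x with hN
  have hbound : ∀ φ : MChain cs E x y, φ.IsStrict cs → φ.r + 1 ≤ N := by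
    intro φ hφ
    have := MChain.length_bound cs hφ
    omega
  have : Finite ↥I := hIfin.to_subtype
  have hfin : Finite (Fin (N + 1) × (Fin (N + 2) → ↥I)) := by infer_instance
  rw [← Set.finite_coe_iff]
  refine Finite.of_injective (fun (φ : ↥S) =>
    ((⟨φ.1.r, by have := hbound φ.1 φ.2; omega⟩ : Fin (N + 1)),
      (fun n => if h : n.1 < φ.1.r + 2
        then ⟨φ.1.c ⟨n.1, h⟩, ⟨φ.1.first_le cs _, φ.1.le_last cs _⟩⟩
        else ⟨x, hxI⟩ : Fin (N + 2) → ↥I))) ?_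
  intro a b heq
  rw [Prod.mk.injEq] at heq
  obtain ⟨h1, h2⟩ := heq
  have hr : a.1.r = b.1.r := congrArg Fin.val h1
  refine Subtype.ext (MChain.ext' cs hr ?_)
  intro i
  have hba := hbound a.1 a.2
  have hbb := hbound b.1 b.2
  have hiN : (i : ℕ) < N + 2 := by have := i.2; omega
  have h3 := congrFun h2 ⟨(i : ℕ), hiN⟩
  rw [dif_pos (show ((⟨(i : ℕ), hiN⟩ : Fin (N+2)) : ℕ) < a.1.r + 2 from i.2),
    dif_pos (show ((⟨(i : ℕ), hiN⟩ : Fin (N+2)) : ℕ) < b.1.r + 2 by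
      have := i.2; simp only [Fin.val_mk]; omega)] at h3
  have h4 := congrArg Subtype.val h3
  simpa using h4

/-- The canonical one-step chain. -/
def chain0 (E : Set W) (hx : x ∈ E) (hy : y ∈ E) (hxy : BruhatLE cs x y) :
    MChain cs E x y where
  r := 0
  c := fun i => if i.1 = 0 then x else y
  first := by norm_num
  last := by norm_num [Fin.last]
  mem := by
    intro i
    split
    · exact hx
    · exact hy
  mono := by
    intro i
    have hi : i = 0 := Fin.ext (Nat.lt_one_iff.mp (show (i : ℕ) < 1 from i.2))
    subst hi
    show BruhatLE cs (if (((0 : Fin 1).castSucc : ℕ) = 0) then x else y)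
      (if (((0 : Fin 1).succ : ℕ) = 0) then x else y)
    simpa using hxy

lemma chain0_strict (E : Set W) (hx : x ∈ E) (hy : y ∈ E) (hxy : BruhatLT cs x y) :
    (chain0 cs E hx hy hxy.1).IsStrict cs := by
  intro i
  have hi : i = 0 := Fin.ext (Nat.lt_one_iff.mp (show (i : ℕ) < 1 from i.2))
  subst hi
  show BruhatLT cs (if (((0 : Fin 1).castSucc : ℕ) = 0) then x else y)
    (if (((0 : Fin 1).succ : ℕ) = 0) then x else y)
  simpa using hxy

lemma eq_chain0 (E : Set W) (hx : x ∈ E) (hy : y ∈ E) (hxy : BruhatLE cs x y)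
    (φ : MChain cs E x y) (hr : φ.r = 0) : φ = chain0 cs E hx hy hxy := by
  refine MChain.ext' cs hr ?_
  intro i
  show φ.c i = if (i : ℕ) = 0 then x else y
  rcases (show (i : ℕ) = 0 ∨ (i : ℕ) = 1 by omega) with h | h
  · rw [if_pos h]
    have hi0 : i = 0 := Fin.ext (by rw [h]; rfl)
    rw [hi0, φ.first]
  · rw [if_neg (by omega)]
    have hi1 : i = Fin.last (φ.r + 1) := Fin.ext (by rw [h]; simp [Fin.last, hr])
    rw [hi1, φ.last]

lemma RchainAux_chain0 (Γ : Type) [AddCommGroup Γ] [LinearOrder Γ] [IsOrderedAddMonoid Γ] (L : W → Γ)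
    (Rp : W → W → LZ Γ) (E : Set W) (hx : x ∈ E) (hy : y ∈ E) (hxy : BruhatLE cs x y) :
    RchainAux Γ L Rp (chain0 cs E hx hy hxy).r (chain0 cs E hx hy hxy).c
      = Rsingle Γ L Rp x y := by
  show Rsingle Γ L Rp ((chain0 cs E hx hy hxy).c 0) ((chain0 cs E hx hy hxy).c 1) = _
  have h0 : (chain0 cs E hx hy hxy).c 0 = x := (chain0 cs E hx hy hxy).first
  have h1 : (chain0 cs E hx hy hxy).c 1 = y := by
    show (if ((1 : Fin 2) : ℕ) = 0 then x else y) = y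
    norm_num
  rw [h0, h1]

/-- Prepending `x` to a chain from `t` to `y`. -/
def prepend (E : Set W) {t : W} (hx : x ∈ E) (hxt : BruhatLE cs x t)
    (ψ : MChain cs E t y) : MChain cs E x y where
  r := ψ.r + 1
  c := Fin.cases x ψ.c
  first := by simp
  last := by
    show Fin.cases x ψ.c (Fin.succ (Fin.last (ψ.r + 1))) = y
    rw [Fin.cases_succ, ψ.last]
  mem := by
    intro i
    induction i using Fin.cases with
    | zero => simpa using hx
    | succ j => simpa using ψ.mem j
  mono := by
    intro i
    induction i using Fin.cases with
    | zero =>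
      rw [Fin.castSucc_zero]
      show BruhatLE cs (Fin.cases x ψ.c 0) (Fin.cases x ψ.c (Fin.succ 0))
      rw [Fin.cases_zero, Fin.cases_succ, ψ.first]
      exact hxt
    | succ j =>
      show BruhatLE cs (Fin.cases x ψ.c (Fin.castSucc (Fin.succ j)))
        (Fin.cases x ψ.c (Fin.succ (Fin.succ j)))
      rw [← Fin.succ_castSucc, Fin.cases_succ, Fin.cases_succ]
      exact ψ.mono j

lemma prepend_c1 (E : Set W) {t : W} (hx : x ∈ E) (hxt : BruhatLE cs x t)
    (ψ : MChain cs E t y) : (prepend cs E hx hxt ψ).c 1 = t := by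
  have h1 : (1 : Fin (ψ.r + 1 + 2)) = Fin.succ 0 := by
    refine Fin.ext ?_
    simp [Fin.val_one]
  show Fin.cases x ψ.c (1 : Fin (ψ.r + 1 + 2)) = t
  rw [h1, Fin.cases_succ, ψ.first]

lemma prepend_strict (E : Set W) {t : W} (hx : x ∈ E) (hxt : BruhatLT cs x t)
    (ψ : MChain cs E t y) (hψ : ψ.IsStrict cs) :
    (prepend cs E hx hxt.1 ψ).IsStrict cs := by
  intro i
  induction i using Fin.cases with
  | zero =>
    rw [Fin.castSucc_zero]
    show BruhatLT cs (Fin.cases x ψ.c 0) (Fin.cases x ψ.c (Fin.succ 0))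
    rw [Fin.cases_zero, Fin.cases_succ, ψ.first]
    exact hxt
  | succ j =>
    show BruhatLT cs (Fin.cases x ψ.c (Fin.castSucc (Fin.succ j)))
      (Fin.cases x ψ.c (Fin.succ (Fin.succ j)))
    rw [← Fin.succ_castSucc]
    exact hψ j

/-- The tail of a chain with at least two steps. -/
def tailChain {E : Set W} (φ : MChain cs E x y) (hr : φ.r ≠ 0) {t : W}
    (h1 : φ.c 1 = t) : MChain cs E t y where
  r := φ.r - 1
  c := fun i => φ.c ⟨i.1 + 1, by have := i.2; omega⟩
  first := by
    refine Eq.trans (congrArg φ.c (Fin.ext ?_)) h1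
    show ((0 : Fin (φ.r - 1 + 2)) : ℕ) + 1 = ((1 : Fin (φ.r + 2)) : ℕ)
    simp [Fin.val_one]
  last := by
    refine Eq.trans (congrArg φ.c (Fin.ext ?_)) φ.last
    show ((Fin.last (φ.r - 1 + 1)) : ℕ) + 1 = ((Fin.last (φ.r + 1)) : ℕ)
    simp only [Fin.val_last]
    omega
  mem := fun i => φ.mem _
  mono := by
    intro i
    exact φ.mono ⟨i.1 + 1, by have := i.2; omega⟩

lemma tailChain_strict {E : Set W} (φ : MChain cs E x y) (hr : φ.r ≠ 0) {t : W}
    (h1 : φ.c 1 = t) (hφ : φ.IsStrict cs) : (tailChain cs φ hr h1).IsStrict cs := by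
  intro i
  refine hφ ⟨i.1 + 1, ?_⟩
  have h2 : (i : ℕ) < φ.r - 1 + 1 := i.2
  omega


lemma MChain.x_lt_c1 {E : Set W} {x y : W} {φ : MChain cs E x y} (hφ : φ.IsStrict cs) :
    BruhatLT cs x (φ.c 1) := by
  have h := hφ 0
  have h1 : (0 : Fin (φ.r + 1)).succ = (1 : Fin (φ.r + 2)) := Fin.ext (by simp [Fin.val_one])
  rw [Fin.castSucc_zero, φ.first, h1] at h
  exact h

lemma MChain.c1_lt_y {E : Set W} {x y : W} {φ : MChain cs E x y} (hφ : φ.IsStrict cs)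
    (hr : φ.r ≠ 0) : BruhatLT cs (φ.c 1) y := by
  have h2 : (1 : ℕ) < φ.r + 1 := by omega
  have h := hφ ⟨1, h2⟩
  have h1 : (⟨1, h2⟩ : Fin (φ.r + 1)).castSucc = (1 : Fin (φ.r + 2)) :=
    Fin.ext (by simp [Fin.val_one])
  rw [h1] at h
  exact bruhatLT_of_lt_of_le cs h (φ.le_last cs _)

lemma RchainAux_tail (Γ : Type) [AddCommGroup Γ] [LinearOrder Γ] [IsOrderedAddMonoid Γ] (L : W → Γ)
    (Rp : W → W → LZ Γ) {E : Set W} {x y : W}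
    (φ : MChain cs E x y) (hr : φ.r ≠ 0) {t : W} (h1 : φ.c 1 = t) :
    RchainAux Γ L Rp φ.r φ.c = Rsingle Γ L Rp x t *
      Uhalf Γ (L y - L t) (qp Γ (L y - L t) *
        barZ Γ (RchainAux Γ L Rp (tailChain cs φ hr h1).r (tailChain cs φ hr h1).c)) := by
  obtain ⟨r, c, hfirst, hlast, hmem, hmono⟩ := φ
  dsimp only at h1 ⊢
  cases r with
  | zero => exact absurd rfl hr
  | succ k =>
    have hl2 : c (Fin.last (k + 2)) = y := hlast
    have hunf : RchainAux Γ L Rp (k + 1) c = Rsingle Γ L Rp (c 0) (c 1) *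
        Uhalf Γ (L (c (Fin.last (k + 2))) - L (c 1))
          (qp Γ (L (c (Fin.last (k + 2))) - L (c 1)) *
            barZ Γ (RchainAux Γ L Rp k (fun i => c i.succ))) := rfl
    rw [hunf, hfirst, h1, hl2]
    rfl

/-- The recursive decomposition of the sum over strict chains. -/
lemma chain_sum_rec (Γ : Type) [AddCommGroup Γ] [LinearOrder Γ] [IsOrderedAddMonoid Γ] (L : W → Γ)
    (Rp : W → W → LZ Γ) {E : Set W} {x y : W} (hx : x ∈ E) (hy : y ∈ E)
    (hxy : BruhatLT cs x y) :
    ∑ᶠ φ ∈ {φ : MChain cs E x y | φ.IsStrict cs}, RchainAux Γ L Rp φ.r φ.c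
      = Rsingle Γ L Rp x y +
        ∑ᶠ t ∈ {t : W | t ∈ E ∧ BruhatLT cs x t ∧ BruhatLT cs t y},
          Rsingle Γ L Rp x t *
            Uhalf Γ (L y - L t) (qp Γ (L y - L t) *
              barZ Γ (∑ᶠ ψ ∈ {ψ : MChain cs E t y | ψ.IsStrict cs},
                RchainAux Γ L Rp ψ.r ψ.c)) := by
  classical
  have hA := finite_strict_chains cs E x y
  have hTfin : {t : W | t ∈ E ∧ BruhatLT cs x t ∧ BruhatLT cs t y}.Finite :=
    Set.Finite.subset (finite_interval cs x y) (fun t ht => ⟨ht.2.1.1, ht.2.2.1⟩)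
  rw [finsum_mem_eq_finite_toFinset_sum _ hA, finsum_mem_eq_finite_toFinset_sum _ hTfin]
  rw [← Finset.sum_filter_add_sum_filter_not hA.toFinset (fun φ => φ.r = 0)]
  congr 1
  · -- chains of length one
    have hsingle : hA.toFinset.filter (fun φ => φ.r = 0) = {chain0 cs E hx hy hxy.1} := by
      ext φ
      rw [Finset.mem_filter, Finset.mem_singleton, Set.Finite.mem_toFinset]
      constructor
      · rintro ⟨hφ, hr⟩
        exact eq_chain0 cs E hx hy hxy.1 φ hr
      · rintro rfl
        exact ⟨chain0_strict cs E hx hy hxy, rfl⟩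
    rw [hsingle, Finset.sum_singleton, RchainAux_chain0]
  · -- longer chains
    have hmaps : ∀ φ ∈ hA.toFinset.filter (fun φ => ¬φ.r = 0),
        φ.c 1 ∈ hTfin.toFinset := by
      intro φ hφ
      rw [Finset.mem_filter, Set.Finite.mem_toFinset] at hφ
      rw [Set.Finite.mem_toFinset]
      exact ⟨φ.mem 1, MChain.x_lt_c1 cs hφ.1, MChain.c1_lt_y cs hφ.1 hφ.2⟩
    rw [← Finset.sum_fiberwise_of_maps_to hmaps]
    refine Finset.sum_congr rfl ?_
    intro t ht
    rw [Set.Finite.mem_toFinset] at ht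
    obtain ⟨htE, hxt, hty⟩ := ht
    have hJ := finite_strict_chains cs E t y
    rw [finsum_mem_eq_finite_toFinset_sum _ hJ, map_sum, Finset.mul_sum, Uhalf_sum,
      Finset.mul_sum]
    refine Finset.sum_bij'
      (i := fun φ hφ => tailChain cs φ
        (by rw [Finset.mem_filter, Finset.mem_filter] at hφ; exact hφ.1.2)
        (by rw [Finset.mem_filter] at hφ; exact hφ.2))
      (j := fun ψ hψ => prepend cs E hx hxt.1 ψ) ?_ ?_ ?_ ?_ ?_
    · -- tail lands in strict chains from t to y
      intro φ hφ
      rw [Finset.mem_filter, Finset.mem_filter, Set.Finite.mem_toFinset] at hφ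
      rw [Set.Finite.mem_toFinset]
      exact tailChain_strict cs φ _ _ hφ.1.1
    · -- prepend lands in the fiber
      intro ψ hψ
      rw [Set.Finite.mem_toFinset] at hψ
      rw [Finset.mem_filter, Finset.mem_filter, Set.Finite.mem_toFinset]
      refine ⟨⟨prepend_strict cs E hx hxt ψ hψ, ?_⟩, prepend_c1 cs E hx hxt.1 ψ⟩
      show ¬(ψ.r + 1 = 0)
      omega
    · -- prepend ∘ tail = id
      intro φ hφ
      rw [Finset.mem_filter, Finset.mem_filter] at hφ
      have hr : φ.r ≠ 0 := hφ.1.2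
      refine MChain.ext' cs (by show φ.r - 1 + 1 = φ.r; omega) ?_
      intro i
      induction i using Fin.cases with
      | zero =>
        show x = φ.c ⟨0, _⟩
        rw [show (⟨0, by omega⟩ : Fin (φ.r + 2)) = 0 from rfl, φ.first]
      | succ j =>
        show (tailChain cs φ hr hφ.2).c j = φ.c ⟨(j.succ : ℕ), _⟩
        rfl
    · -- tail ∘ prepend = id
      intro ψ hψ
      refine MChain.ext' cs (by show ψ.r + 1 - 1 = ψ.r; omega) ?_
      intro i
      have h2 : (i : ℕ) < ψ.r + 2 := i.2
      show Fin.cases x ψ.c (Fin.succ ⟨(i : ℕ), h2⟩) = ψ.c ⟨(i : ℕ), h2⟩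
      rw [Fin.cases_succ]
    · -- values agree
      intro φ hφ
      rw [Finset.mem_filter, Finset.mem_filter] at hφ
      exact RchainAux_tail cs Γ L Rp φ hφ.1.2 hφ.2


theorem stmt_14'
    {B W : Type} [Group W] {M : CoxeterMatrix B} (cs : CoxeterSystem M W)
    (Γ : Type) [AddCommGroup Γ] [LinearOrder Γ] [IsOrderedAddMonoid Γ]
    (L : W → Γ)
    (E : Set W)
    (Rp : W → W → LZ Γ)
    (P : W → W → LZ Γ)
    (hPdiag : ∀ x ∈ E, P x x = 1)
    (hPdeg : ∀ x y : W, x ∈ E → y ∈ E → BruhatLT cs x y → P x y ≠ 0 →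
      ∃ d : Γ, degq Γ (P x y) = (d : WithBot Γ) ∧ d + d < L y - L x)
    (hPdef : ∀ x y : W, x ∈ E → y ∈ E → BruhatLE cs x y →
      qp Γ (L y - L x) * barZ Γ (P x y) =
        ∑ᶠ t ∈ {t : W | t ∈ E ∧ BruhatLE cs x t ∧ BruhatLE cs t y}, Rp x t * P t y)
    (x y : W) (hx : x ∈ E) (hy : y ∈ E)
    (hxy : BruhatLT cs x y)
    :
    P x y = Lhalf Γ (L y - L x)
      (∑ᶠ φ ∈ {φ : MChain cs E x y | φ.IsStrict cs}, RchainAux Γ L Rp φ.r φ.c) := by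
  classical
  have hRdiag : ∀ z, z ∈ E → Rp z z = 1 := by
    intro z hz
    have h := hPdef z z hz hz (bruhatLE_refl cs z)
    have hset : {t : W | t ∈ E ∧ BruhatLE cs z t ∧ BruhatLE cs t z} = {z} := by
      ext u
      simp only [Set.mem_setOf_eq, Set.mem_singleton_iff]
      constructor
      · rintro ⟨-, h1, h2⟩
        exact bruhatLE_antisymm cs h2 h1
      · rintro rfl
        exact ⟨hz, bruhatLE_refl cs _, bruhatLE_refl cs _⟩
    rw [hset, finsum_mem_singleton, hPdiag z hz, mul_one, sub_self, qp_zero,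
      one_mul, barZ_one] at h
    exact h.symm
  suffices H : ∀ (n : ℕ) (x y : W), x ∈ E → y ∈ E → BruhatLT cs x y →
      cs.length y - cs.length x = n →
      P x y = Lhalf Γ (L y - L x)
        (∑ᶠ φ ∈ {φ : MChain cs E x y | φ.IsStrict cs}, RchainAux Γ L Rp φ.r φ.c) by
    exact H _ x y hx hy hxy rfl
  clear hx hy hxy x y
  intro n
  induction n using Nat.strong_induction_on with
  | _ n ih =>
  intro x y hx hy hxy hn
  have hPbound : ∀ γ ∈ (P x y).coeff.support, γ + γ < L y - L x := by
    by_cases h0 : P x y = 0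
    · rw [h0]
      intro γ hγ
      simp at hγ
    · obtain ⟨d, hd1, hd2⟩ := hPdeg x y hx hy hxy h0
      exact support_half_bound Γ hd1 hd2
  have hIfin : {t : W | t ∈ E ∧ BruhatLE cs x t ∧ BruhatLE cs t y}.Finite :=
    Set.Finite.subset (finite_interval cs x y) (fun t ht => ht.2)
  have key := hPdef x y hx hy hxy.1
  rw [finsum_mem_eq_finite_toFinset_sum _ hIfin] at key
  have key2 : P x y = ∑ t ∈ hIfin.toFinset, qp Γ (L y - L x) * barZ Γ (Rp x t * P t y) := by
    have h1 := congrArg (fun f => qp Γ (L y - L x) * barZ Γ f) key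
    rw [map_mul, barZ_barZ, barZ_qp, ← mul_assoc, qp_mul, add_neg_cancel, qp_zero,
      one_mul, map_sum, Finset.mul_sum] at h1
    exact h1
  have hterm : ∀ t ∈ hIfin.toFinset, qp Γ (L y - L x) * barZ Γ (Rp x t * P t y)
      = Rsingle Γ L Rp x t * (qp Γ (L y - L t) * barZ Γ (P t y)) := by
    intro t _
    rw [map_mul, Rsingle,
      show L y - L x = (L t - L x) + (L y - L t) by abel, ← qp_mul]
    ring
  rw [Finset.sum_congr rfl hterm] at key2
  have key3 := congrArg (Lhalf Γ (L y - L x)) key2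
  rw [Lhalf_eq_self Γ hPbound, Lhalf_sum] at key3
  have hxmem : x ∈ hIfin.toFinset := by
    rw [Set.Finite.mem_toFinset]
    exact ⟨hx, bruhatLE_refl cs x, hxy.1⟩
  have hymem : y ∈ hIfin.toFinset.erase x :=
    Finset.mem_erase.mpr ⟨fun h => hxy.2 h.symm,
      hIfin.mem_toFinset.mpr ⟨hy, hxy.1, bruhatLE_refl cs y⟩⟩
  rw [← Finset.add_sum_erase _ _ hxmem, ← Finset.add_sum_erase _ _ hymem] at key3
  have hterm_x : Lhalf Γ (L y - L x)
      (Rsingle Γ L Rp x x * (qp Γ (L y - L x) * barZ Γ (P x y))) = 0 := by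
    rw [Rsingle, sub_self, qp_zero, one_mul, hRdiag x hx, barZ_one, one_mul]
    exact Lhalf_qp_bar_eq_zero Γ hPbound
  have hterm_y : Lhalf Γ (L y - L x)
      (Rsingle Γ L Rp x y * (qp Γ (L y - L y) * barZ Γ (P y y)))
      = Lhalf Γ (L y - L x) (Rsingle Γ L Rp x y) := by
    rw [hPdiag y hy, barZ_one, sub_self, qp_zero, one_mul, mul_one]
  have hmid : ∀ t ∈ (hIfin.toFinset.erase x).erase y,
      Lhalf Γ (L y - L x) (Rsingle Γ L Rp x t * (qp Γ (L y - L t) * barZ Γ (P t y)))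
        = Lhalf Γ (L y - L x) (Rsingle Γ L Rp x t *
            Uhalf Γ (L y - L t) (qp Γ (L y - L t) *
              barZ Γ (∑ᶠ ψ ∈ {ψ : MChain cs E t y | ψ.IsStrict cs},
                RchainAux Γ L Rp ψ.r ψ.c))) := by
    intro t htmem
    rw [Finset.mem_erase, Finset.mem_erase, Set.Finite.mem_toFinset] at htmem
    obtain ⟨hty, htx, htE, hxt, hle⟩ := htmem
    have hxtlt : BruhatLT cs x t := ⟨hxt, fun h => htx h.symm⟩
    have htylt : BruhatLT cs t y := ⟨hle, hty⟩
    have hlt : cs.length y - cs.length t < n := by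
      have h1 := bruhatLT_length_lt cs hxtlt
      have h2 := bruhatLT_length_lt cs htylt
      omega
    have hIH := ih _ hlt t y htE hy htylt rfl
    rw [hIH, ← Uhalf_qp_bar]
  rw [hterm_x, hterm_y, Finset.sum_congr rfl hmid, zero_add] at key3
  rw [key3, chain_sum_rec cs Γ L Rp hx hy hxy]
  have hTfin : {t : W | t ∈ E ∧ BruhatLT cs x t ∧ BruhatLT cs t y}.Finite :=
    Set.Finite.subset (finite_interval cs x y) (fun t ht => ⟨ht.2.1.1, ht.2.2.1⟩)
  rw [finsum_mem_eq_finite_toFinset_sum _ hTfin, Lhalf_add, Lhalf_sum]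
  congr 1
  apply Finset.sum_congr
  · ext u
    rw [Finset.mem_erase, Finset.mem_erase, Set.Finite.mem_toFinset,
      Set.Finite.mem_toFinset]
    constructor
    · rintro ⟨huy, hux, huE, hxu, huy2⟩
      exact ⟨huE, ⟨hxu, fun h => hux h.symm⟩, ⟨huy2, huy⟩⟩
    · rintro ⟨huE, hxu, huy⟩
      exact ⟨huy.2, fun h => hxu.2 h.symm, huE, hxu.1, huy.1⟩
  · intro t _
    rfl

theorem stmt_14
    {B W : Type} [Group W] {M : CoxeterMatrix B} (cs : CoxeterSystem M W)
    (Γ : Type) [AddCommGroup Γ] [LinearOrder Γ] [IsOrderedAddMonoid Γ]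
    -- `L` is a weight function on `W` with values in `Γ`, nonnegative on simple reflections
    (L : W → Γ)
    (hLadd : ∀ u v : W, cs.length (u * v) = cs.length u + cs.length v →
      L (u * v) = L u + L v)
    (hLpos : ∀ i : B, (0 : Γ) ≤ L (cs.simple i))
    -- `H` is the Hecke algebra of `(W, S, L)`, free over `ℤ[Γ]` with basis `{T_w}`
    {H : Type} [Ring H] [Algebra (LZ Γ) H]
    (T : Module.Basis W (LZ Γ) H)
    (hTone : T 1 = 1)
    (hTmul₁ : ∀ (i : B) (w : W), cs.length w < cs.length (cs.simple i * w) →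
      T (cs.simple i) * T w = T (cs.simple i * w))
    (hTmul₂ : ∀ (i : B) (w : W), cs.length (cs.simple i * w) < cs.length w →
      T (cs.simple i) * T w =
        qp Γ (L (cs.simple i)) • T (cs.simple i * w) + (qp Γ (L (cs.simple i)) - 1) • T w)
    -- the bar involution on `H`
    (barH : H ≃+* H)
    (hbarHsmul : ∀ (a : LZ Γ) (h : H), barH (a • h) = barZ Γ a • barH h)
    (hbarHT : ∀ i : B, barH (T (cs.simple i)) =
      qp Γ (-(L (cs.simple i))) • T (cs.simple i) + (qp Γ (-(L (cs.simple i))) - 1) • (1 : H))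
    -- `E = E_J ⊆ D_J` is an ideal in the left weak Bruhat order
    (J : Set B) (E : Set W)
    (hED : E ⊆ DJ cs J)
    (hIdeal : ∀ y ∈ E, ∀ x : W, IsSuffix cs x y → x ∈ E)
    -- `E` is a `W`-graph ideal: the module `M(E_J, L)` with basis `{Γ_y := G y : y ∈ E}`
    {MM : Type} [AddCommGroup MM] [Module (LZ Γ) MM] [Module H MM]
    [IsScalarTower (LZ Γ) H MM]
    (G : W → MM)
    (hGbasis : ∃ b : Module.Basis ↥E (LZ Γ) MM, ∀ y : ↥E, b y = G ↑y)
    (hSD : ∀ (i : B) (y : W), y ∈ E → cs.length (cs.simple i * y) < cs.length y →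
      T (cs.simple i) • G y =
        qp Γ (L (cs.simple i)) • G (cs.simple i * y) + (qp Γ (L (cs.simple i)) - 1) • G y)
    (hSA : ∀ (i : B) (y : W), y ∈ E → cs.length y < cs.length (cs.simple i * y) →
      cs.simple i * y ∈ E → T (cs.simple i) • G y = G (cs.simple i * y))
    (hWD : ∀ (i : B) (y : W), y ∈ E → cs.length y < cs.length (cs.simple i * y) →
      cs.simple i * y ∉ DJ cs J → T (cs.simple i) • G y = - G y)
    (hWA : ∀ (i : B) (y : W), y ∈ E → cs.length y < cs.length (cs.simple i * y) →
      cs.simple i * y ∈ DJ cs J → cs.simple i * y ∉ E →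
      ∃ rr : W → LZ Γ, (∀ z : W, rr z ≠ 0 → z ∈ E ∧ BruhatLT cs z (cs.simple i * y)) ∧
        (∀ z : W, ∃ g : LZ Γ, rr z = qp Γ (L (cs.simple i)) * g) ∧
        {z : W | rr z ≠ 0}.Finite ∧
        T (cs.simple i) • G y = qp Γ (L (cs.simple i)) • G y - ∑ᶠ z : W, rr z • G z)
    -- the `ℤ[Γ]`-semilinear bar involution on `M(E_J, L)`
    (barM : MM → MM)
    (hbarMadd : ∀ m m' : MM, barM (m + m') = barM m + barM m')
    (hbarMsmul : ∀ (a : LZ Γ) (m : MM), barM (a • m) = barZ Γ a • barM m)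
    (hbarMone : barM (G 1) = G 1)
    (hbarMT : ∀ (w y : W), y ∈ E → barM (T w • G y) = barH (T w) • barM (G y))
    -- the weighted `R`-polynomials
    (Rp : W → W → LZ Γ)
    (hRpzero : ∀ x y : W, x ∉ E ∨ y ∉ E → Rp x y = 0)
    (hRpdef : ∀ y ∈ E, barM (G y) =
      ∑ᶠ x ∈ E, (((eps cs x * eps cs y : ℤ) : LZ Γ) * qp Γ (-(L y)) * Rp x y) • G x)
    -- the weighted Kazhdan-Lusztig polynomials
    (P : W → W → LZ Γ)
    (hPdiag : ∀ x ∈ E, P x x = 1)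
    (hPsupp : ∀ x y : W, ¬ BruhatLE cs x y → P x y = 0)
    (hPdeg : ∀ x y : W, x ∈ E → y ∈ E → BruhatLT cs x y → P x y ≠ 0 →
      ∃ d : Γ, degq Γ (P x y) = (d : WithBot Γ) ∧ d + d < L y - L x)
    (hPdef : ∀ x y : W, x ∈ E → y ∈ E → BruhatLE cs x y →
      qp Γ (L y - L x) * barZ Γ (P x y) =
        ∑ᶠ t ∈ {t : W | t ∈ E ∧ BruhatLE cs x t ∧ BruhatLE cs t y}, Rp x t * P t y)
    (x y : W) (hx : x ∈ E) (hy : y ∈ E)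
    (hxy : BruhatLT cs x y)
    :
    P x y = Lhalf Γ (L y - L x)
      (∑ᶠ φ ∈ {φ : MChain cs E x y | φ.IsStrict cs}, RchainAux Γ L Rp φ.r φ.c) := by
  exact stmt_14' cs Γ L E Rp P hPdiag hPdeg hPdef x y hx hy hxy

end WGI
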